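/- For every countable subgroup K of ℝ/ℤ and every subgroup H₀ of Homeo₊([0,1]), the unrestricted wreath product H₀ ≀ K = (∏_{k∈K} H₀) ⋊ K embeds into Homeo₊(S^1). -/

import Mathlib

open Function Set

notation "S¹" => AddCircle (1:ℝ)

/-- The group structure on self-homeomorphisms, with `(f * g) x = f (g x)`. -/
instance homeoGroup (X : Type*) [TopologicalSpace X] : Group (X ≃ₜ X) where
  mul f g := g.trans f
  one := Homeomorph.refl X
  inv := Homeomorph.symm
  mul_assoc a b c := Homeomorph.ext fun _ => rfl
  one_mul a := Homeomorph.ext fun _ => rfl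
  mul_one a := Homeomorph.ext fun _ => rfl
  inv_mul_cancel a := Homeomorph.ext fun x => a.symm_apply_apply x

/-- `F` is a lift of the circle homeomorphism `f` through the projection `ℝ → ℝ/ℤ`. -/
def IsLift (f : S¹ ≃ₜ S¹) (F : CircleDeg1Lift) : Prop :=
  ∀ x : ℝ, f (x : S¹) = ((F x : ℝ) : S¹)

/-- A circle homeomorphism is orientation-preserving iff it admits a monotone degree-one
lift to the real line. -/
def OrientationPreserving (f : S¹ ≃ₜ S¹) : Prop := ∃ F : CircleDeg1Lift, IsLift f F

open Classical in
/-- Poincaré's rotation number of a circle homeomorphism, as an element of `ℝ/ℤ`;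
the translation number of any lift, reduced mod 1. -/
noncomputable def rot (f : S¹ ≃ₜ S¹) : S¹ :=
  if h : OrientationPreserving f then ((h.choose.translationNumber : ℝ) : S¹) else 0

/-- The fixed-point set of a circle homeomorphism. -/
def FixSet (f : S¹ ≃ₜ S¹) : Set S¹ := {s | f s = s}

/-- A subgroup has a non-abelian free subgroup iff the free group of rank 2 embeds into it. -/
def HasFreeSubgroup {Γ : Type*} [Group Γ] (G : Subgroup Γ) : Prop :=
  ∃ φ : FreeGroup (Fin 2) →* Γ, Function.Injective φ ∧ ∀ w, φ w ∈ G

/-- The shift action of a subgroup `K ≤ ℝ/ℤ` on the unrestricted direct product of copies of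
a group `H` indexed by `K`, by translating coordinates. -/
noncomputable def shiftAut (K : AddSubgroup S¹) (H : Type*) [Group H] :
    Multiplicative ↥K →* MulAut (↥K → H) where
  toFun k :=
    { toFun := fun f x => f (x - Multiplicative.toAdd k)
      invFun := fun f x => f (x + Multiplicative.toAdd k)
      left_inv := fun f => funext fun x => by simp
      right_inv := fun f => funext fun x => by simp
      map_mul' := fun f g => rfl }
  map_one' := by ext f x; simp
  map_mul' := fun a b => by ext f x; simp [sub_sub]


section Denjoy

variable (K : AddSubgroup S¹)

noncomputable def rr (x : ↥K) : ℝ := (AddCircle.equivIco 1 0 x.1 : ℝ)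

lemma coe_rr (x : ↥K) : ((rr K x : ℝ) : S¹) = x.1 := (AddCircle.equivIco 1 0).symm_apply_apply x.1

lemma exists_int_of_coe_eq {a b : ℝ} (h : (a:S¹) = b) : ∃ n : ℤ, b = a + n := by
  rw [QuotientAddGroup.eq_iff_sub_mem] at h
  obtain ⟨n, hn⟩ := h
  simp only [zsmul_eq_mul, mul_one] at hn
  exact ⟨-n, by push_cast; linarith⟩

lemma coe_add_int (a : ℝ) (n : ℤ) : ((a + n : ℝ) : S¹) = a := by
  rw [QuotientAddGroup.eq_iff_sub_mem]
  exact ⟨n, by simp⟩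

variable (w : ↥K → ℝ)

noncomputable def WW (t : ℝ) : ℝ := ∑' x, w x * ⌈t - rr K x⌉

noncomputable def cc : ℝ := ∑' x, w x

section lemmas
variable {K w}
variable (hw : ∀ x, 0 < w x) (hsum : Summable w)

lemma abs_ceil_le (a : ℝ) : |(⌈a⌉ : ℝ)| ≤ |a| + 1 := by
  rw [abs_le]
  constructor
  · have := Int.le_ceil a
    have := neg_abs_le a
    linarith
  · have := (Int.ceil_lt_add_one a).le
    have := le_abs_self a
    linarith

include hsum in
lemma summable_term (t : ℝ) : Summable (fun x => w x * ⌈t - rr K x⌉) := by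
  have h1 : Summable (fun x : ↥K => |w x| * (|t| + 2)) := by
    simpa using ((hsum.abs).mul_right (|t| + 2))
  refine Summable.of_abs (Summable.of_nonneg_of_le (fun x => abs_nonneg _) (fun x => ?_) h1)
  rw [abs_mul]
  refine mul_le_mul_of_nonneg_left ?_ (abs_nonneg _)
  have h2 := abs_ceil_le (t - rr K x)
  have h3 : |t - rr K x| ≤ |t| + 1 := by
    have hr : rr K x ∈ Ico (0:ℝ) (0+1) := (AddCircle.equivIco 1 0 x.1).2
    rw [abs_sub_comm]
    rw [abs_le]
    rcases hr with ⟨h0, h1'⟩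
    have := abs_nonneg t
    have := le_abs_self t
    have := neg_abs_le t
    constructor <;> [linarith; linarith]
  linarith

include hw hsum in
lemma W_mono : Monotone (WW K w) := by
  intro s t hst
  refine Summable.tsum_le_tsum (fun x => ?_) (summable_term hsum s) (summable_term hsum t)
  have : (⌈s - rr K x⌉:ℝ) ≤ ⌈t - rr K x⌉ := by
    exact_mod_cast Int.ceil_le_ceil (by linarith)
  exact mul_le_mul_of_nonneg_left this (hw x).le

include hsum in
lemma W_add_int (t : ℝ) (n : ℤ) : WW K w (t + n) = WW K w t + n * cc K w := by
  have h1 : ∀ x : ↥K, w x * ⌈t + n - rr K x⌉ = w x * ⌈t - rr K x⌉ + n * w x := by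
    intro x
    have : (t + n - rr K x) = (t - rr K x) + n := by ring
    rw [this, Int.ceil_add_intCast]
    push_cast
    ring
  rw [WW, tsum_congr h1, Summable.tsum_add (summable_term hsum t) (by simpa using hsum.mul_left (n:ℝ))]
  rw [WW, cc, tsum_mul_left]

include hw hsum in
lemma W_jump_ge (x : ↥K) (x' : ℝ) (hx' : (x' : S¹) = x.1) {t : ℝ} (ht : x' < t) :
    WW K w x' + w x ≤ WW K w t := by
  -- x' = rr K x + m
  obtain ⟨m, hm⟩ := exists_int_of_coe_eq ((coe_rr K x).trans hx'.symm)
  set d : ↥K → ℝ := fun z => w z * ⌈t - rr K z⌉ - w z * ⌈x' - rr K z⌉ with hd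
  have hdsum : Summable d := (summable_term hsum t).sub (summable_term hsum x')
  have hdnonneg : ∀ z, 0 ≤ d z := by
    intro z
    have : (⌈x' - rr K z⌉:ℝ) ≤ ⌈t - rr K z⌉ := by
      exact_mod_cast Int.ceil_le_ceil (by linarith)
    have := mul_le_mul_of_nonneg_left this (hw z).le
    simp [hd]; linarith
  have hx : w x ≤ d x := by
    have hceil : ⌈x' - rr K x⌉ = m := by rw [hm]; simp
    have hceil2 : m + 1 ≤ ⌈t - rr K x⌉ := by
      rw [Int.add_one_le_iff, Int.lt_ceil]
      rw [hm] at ht; push_cast; linarith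
    have : (⌈x' - rr K x⌉:ℝ) + 1 ≤ (⌈t - rr K x⌉:ℝ) := by exact_mod_cast hceil ▸ hceil2
    have := mul_le_mul_of_nonneg_left this (hw x).le
    simp [hd]; nlinarith [(hw x).le]
  have hle : w x ≤ ∑' z, d z := le_trans hx (Summable.le_tsum hdsum x (fun z _ => hdnonneg z))
  have : ∑' z, d z = WW K w t - WW K w x' := by
    rw [hd, Summable.tsum_sub (summable_term hsum t) (summable_term hsum x')]
    rfl
  linarith [this ▸ hle]

include hsum in
lemma exists_tail {ε : ℝ} (hε : 0 < ε) :
    ∃ S : Finset ↥K, ∑' (z : {z : ↥K // z ∉ S}), w z ≤ ε := by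
  have h := (tendsto_tsum_compl_atTop_zero w).eventually (eventually_le_nhds hε)
  obtain ⟨S, hS⟩ := h.exists
  exact ⟨S, hS⟩

lemma eq_of_int_diff {t₀ : ℝ} {z : ↥K} (m : ℤ) (hm : t₀ - rr K z = m) :
    ((t₀ : ℝ) : S¹) ∈ K ∧ ∀ h : ((t₀:ℝ):S¹) ∈ K, z = ⟨(t₀:S¹), h⟩ := by
  have h1 : ((t₀:ℝ):S¹) = z.1 := by
    have ht : t₀ = rr K z + m := by linarith
    rw [ht, coe_add_int, coe_rr]
  constructor
  · rw [h1]; exact z.2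
  · intro h
    exact Subtype.ext h1.symm

end lemmas

open Classical in
noncomputable def jmp (t : ℝ) : ℝ := if h : ((t:ℝ) : S¹) ∈ K then w ⟨((t:ℝ):S¹), h⟩ else 0

section lemmas2
variable {K w}
variable (hw : ∀ x, 0 < w x) (hsum : Summable w)

include hw in
lemma jmp_nonneg (t : ℝ) : 0 ≤ jmp K w t := by
  unfold jmp
  split
  · exact (hw _).le
  · exact le_refl 0

include hw hsum in
lemma W_right (t₀ : ℝ) {ε : ℝ} (hε : 0 < ε) :
    ∃ δ > 0, ∀ t, t₀ < t → t < t₀ + δ → WW K w t ≤ WW K w t₀ + jmp K w t₀ + ε := by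
  classical
  obtain ⟨S, hS⟩ := exists_tail hsum hε
  set Δ : ↥K → ℝ := fun z => rr K z + ⌈t₀ - rr K z⌉ - t₀ with hΔ
  have hΔ0 : ∀ z, 0 ≤ Δ z := by
    intro z
    have := Int.le_ceil (t₀ - rr K z)
    simp only [hΔ]; linarith
  have hδex : ∃ δ, 0 < δ ∧ δ ≤ 1 ∧ ∀ z ∈ S, 0 < Δ z → δ ≤ Δ z := by
    by_cases hne : (S.filter (fun z => 0 < Δ z)).Nonempty
    · obtain ⟨z₀, hz₀S, hz₀m⟩ := Finset.exists_min_image (S.filter (fun z => 0 < Δ z)) Δ hne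
      have hz₀pos : 0 < Δ z₀ := (Finset.mem_filter.1 hz₀S).2
      refine ⟨min 1 (Δ z₀), lt_min one_pos hz₀pos, min_le_left _ _, ?_⟩
      intro z hz hzpos
      exact le_trans (min_le_right _ _) (hz₀m z (Finset.mem_filter.2 ⟨hz, hzpos⟩))
    · exact ⟨1, one_pos, le_refl 1, fun z hz hzpos =>
        absurd ⟨z, Finset.mem_filter.2 ⟨hz, hzpos⟩⟩ hne⟩
  obtain ⟨δ, hδpos, hδ1, hδ⟩ := hδex
  refine ⟨δ, hδpos, ?_⟩
  intro t ht1 ht2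
  set d : ↥K → ℝ := fun z => w z * ⌈t - rr K z⌉ - w z * ⌈t₀ - rr K z⌉ with hd
  have hdsum : Summable d := (summable_term hsum t).sub (summable_term hsum t₀)
  have hdnonneg : ∀ z, 0 ≤ d z := by
    intro z
    have : (⌈t₀ - rr K z⌉:ℝ) ≤ ⌈t - rr K z⌉ := by
      exact_mod_cast Int.ceil_le_ceil (by linarith)
    have := mul_le_mul_of_nonneg_left this (hw z).le
    simp only [hd]; linarith
  have hdle : ∀ z, d z ≤ w z := by
    intro z
    have hceil : ⌈t - rr K z⌉ ≤ ⌈t₀ - rr K z⌉ + 1 := by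
      have : ⌈t₀ - rr K z⌉ + 1 = ⌈(t₀ - rr K z) + 1⌉ := by
        rw [show (t₀ - rr K z) + 1 = (t₀ - rr K z) + (1:ℤ) by push_cast; ring, Int.ceil_add_intCast]
      rw [this]
      exact Int.ceil_le_ceil (by linarith)
    have : (⌈t - rr K z⌉:ℝ) ≤ (⌈t₀ - rr K z⌉:ℝ) + 1 := by exact_mod_cast hceil
    have := mul_le_mul_of_nonneg_left this (hw z).le
    simp only [hd]; nlinarith [(hw z).le]
  have hdzero : ∀ z ∈ S, 0 < Δ z → d z = 0 := by
    intro z hz hzpos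
    have h1 : ⌈t - rr K z⌉ ≤ ⌈t₀ - rr K z⌉ := by
      rw [Int.ceil_le]
      have : t < t₀ + Δ z := lt_of_lt_of_le ht2 (by linarith [hδ z hz hzpos])
      simp only [hΔ] at this
      push_cast
      linarith
    have h2 : ⌈t₀ - rr K z⌉ ≤ ⌈t - rr K z⌉ := Int.ceil_le_ceil (by linarith)
    have : ⌈t - rr K z⌉ = ⌈t₀ - rr K z⌉ := le_antisymm h1 h2
    simp only [hd, this, sub_self]
  -- sum over S is at most jmp
  have hsumS : ∑ z ∈ S, d z ≤ jmp K w t₀ := by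
    by_cases hmem : ((t₀:ℝ):S¹) ∈ K
    · set z₀ : ↥K := ⟨((t₀:ℝ):S¹), hmem⟩ with hz₀
      have hothers : ∀ z ∈ S, z ≠ z₀ → d z = 0 := by
        intro z hz hne
        refine hdzero z hz ?_
        rcases lt_or_eq_of_le (hΔ0 z) with h | h
        · exact h
        · exfalso
          have : t₀ - rr K z = (⌈t₀ - rr K z⌉ : ℤ) := by simp only [hΔ] at h; push_cast; linarith
          exact hne ((eq_of_int_diff _ this).2 hmem)
      have hjmp : jmp K w t₀ = w z₀ := by rw [jmp, dif_pos hmem]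
      by_cases hz₀S : z₀ ∈ S
      · rw [Finset.sum_eq_single_of_mem z₀ hz₀S hothers, hjmp]
        exact hdle z₀
      · rw [Finset.sum_eq_zero (fun z hz => hothers z hz (by rintro rfl; exact hz₀S hz))]
        rw [hjmp]; exact (hw z₀).le
    · have : ∀ z ∈ S, d z = 0 := by
        intro z hz
        refine hdzero z hz ?_
        rcases lt_or_eq_of_le (hΔ0 z) with h | h
        · exact h
        · exfalso
          have : t₀ - rr K z = (⌈t₀ - rr K z⌉ : ℤ) := by simp only [hΔ] at h; push_cast; linarith
          exact hmem (eq_of_int_diff _ this).1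
      rw [Finset.sum_eq_zero this]
      exact jmp_nonneg hw t₀
  have htail : ∑' (z : {z : ↥K // z ∉ S}), d z ≤ ε := by
    refine le_trans (Summable.tsum_le_tsum (fun z => hdle z.1) ?_ ?_) hS
    · exact hdsum.subtype _
    · exact hsum.subtype _
  have hsplit : ∑ z ∈ S, d z + ∑' (z : {z : ↥K // z ∉ S}), d z = ∑' z, d z := by
    exact Summable.sum_add_tsum_compl hdsum
  have htot : ∑' z, d z = WW K w t - WW K w t₀ := by
    rw [hd, Summable.tsum_sub (summable_term hsum t) (summable_term hsum t₀)]
    rfl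
  linarith [hsplit, htot, hsumS, htail, hsplit.symm ▸ htot]

include hw hsum in
lemma W_left (t₀ : ℝ) {ε : ℝ} (hε : 0 < ε) :
    ∃ δ > 0, ∀ t, t₀ - δ < t → t < t₀ → WW K w t₀ ≤ WW K w t + ε := by
  classical
  obtain ⟨S, hS⟩ := exists_tail hsum hε
  set Δ : ↥K → ℝ := fun z => t₀ - rr K z - ⌈t₀ - rr K z⌉ + 1 with hΔ
  have hΔ0 : ∀ z, 0 < Δ z := by
    intro z
    have := Int.ceil_lt_add_one (t₀ - rr K z)
    simp only [hΔ]; linarith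
  have hδex : ∃ δ, 0 < δ ∧ δ ≤ 1 ∧ ∀ z ∈ S, δ ≤ Δ z := by
    by_cases hne : S.Nonempty
    · obtain ⟨z₀, hz₀S, hz₀m⟩ := Finset.exists_min_image S Δ hne
      exact ⟨min 1 (Δ z₀), lt_min one_pos (hΔ0 z₀), min_le_left _ _,
        fun z hz => le_trans (min_le_right _ _) (hz₀m z hz)⟩
    · exact ⟨1, one_pos, le_refl 1, fun z hz => absurd ⟨z, hz⟩ hne⟩
  obtain ⟨δ, hδpos, hδ1, hδ⟩ := hδex
  refine ⟨δ, hδpos, ?_⟩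
  intro t ht1 ht2
  set d : ↥K → ℝ := fun z => w z * ⌈t₀ - rr K z⌉ - w z * ⌈t - rr K z⌉ with hd
  have hdsum : Summable d := (summable_term hsum t₀).sub (summable_term hsum t)
  have hdnonneg : ∀ z, 0 ≤ d z := by
    intro z
    have : (⌈t - rr K z⌉:ℝ) ≤ ⌈t₀ - rr K z⌉ := by
      exact_mod_cast Int.ceil_le_ceil (by linarith)
    have := mul_le_mul_of_nonneg_left this (hw z).le
    simp only [hd]; linarith
  have hdle : ∀ z, d z ≤ w z := by
    intro z
    have hceil : ⌈t₀ - rr K z⌉ ≤ ⌈t - rr K z⌉ + 1 := by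
      have : ⌈t - rr K z⌉ + 1 = ⌈(t - rr K z) + 1⌉ := by
        rw [show (t - rr K z) + 1 = (t - rr K z) + (1:ℤ) by push_cast; ring, Int.ceil_add_intCast]
      rw [this]
      exact Int.ceil_le_ceil (by linarith)
    have : (⌈t₀ - rr K z⌉:ℝ) ≤ (⌈t - rr K z⌉:ℝ) + 1 := by exact_mod_cast hceil
    have := mul_le_mul_of_nonneg_left this (hw z).le
    simp only [hd]; nlinarith [(hw z).le]
  have hdzero : ∀ z ∈ S, d z = 0 := by
    intro z hz
    have h1 : ⌈t₀ - rr K z⌉ ≤ ⌈t - rr K z⌉ := by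
      have : (⌈t₀ - rr K z⌉ - 1) + 1 ≤ ⌈t - rr K z⌉ := by
        rw [Int.add_one_le_iff, Int.lt_ceil]
        have := hδ z hz
        simp only [hΔ] at this
        push_cast
        linarith
      linarith
    have h2 : ⌈t - rr K z⌉ ≤ ⌈t₀ - rr K z⌉ := Int.ceil_le_ceil (by linarith)
    have : ⌈t₀ - rr K z⌉ = ⌈t - rr K z⌉ := le_antisymm h1 h2
    simp only [hd, this, sub_self]
  have hsumS : ∑ z ∈ S, d z = 0 := Finset.sum_eq_zero hdzero
  have htail : ∑' (z : {z : ↥K // z ∉ S}), d z ≤ ε := by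
    refine le_trans (Summable.tsum_le_tsum (fun z => hdle z.1) ?_ ?_) hS
    · exact hdsum.subtype _
    · exact hsum.subtype _
  have hsplit : ∑ z ∈ S, d z + ∑' (z : {z : ↥K // z ∉ S}), d z = ∑' z, d z :=
    Summable.sum_add_tsum_compl hdsum
  have htot : ∑' z, d z = WW K w t₀ - WW K w t := by
    rw [hd, Summable.tsum_sub (summable_term hsum t₀) (summable_term hsum t)]
    rfl
  linarith

end lemmas2

noncomputable def Phi (t : ℝ) : ℝ := (t + WW K w t) / (1 + cc K w)

noncomputable def pii (y : ℝ) : ℝ := sSup {t | Phi K w t ≤ y}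

section lemmas3
variable {K w}
variable (hw : ∀ x, 0 < w x) (hsum : Summable w)

include hw in
lemma cc_nonneg : 0 ≤ cc K w := tsum_nonneg (fun x => (hw x).le)

include hw in
lemma one_add_cc_pos : 0 < 1 + cc K w := by linarith [cc_nonneg hw]

include hw hsum in
lemma Phi_strictMono : StrictMono (Phi K w) := by
  intro s t hst
  have h := W_mono hw hsum hst.le
  have hc := one_add_cc_pos hw
  unfold Phi
  rw [div_lt_div_iff₀ hc hc]
  nlinarith

include hw hsum in
lemma Phi_add_int (t : ℝ) (n : ℤ) : Phi K w (t + n) = Phi K w t + n := by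
  have hc := one_add_cc_pos hw
  unfold Phi
  rw [W_add_int hsum]
  field_simp
  ring

include hw hsum in
lemma Phi_lb (u : ℝ) : u + (WW K w 0 - cc K w) / (1 + cc K w) ≤ Phi K w u := by
  have hc := one_add_cc_pos hw
  have hcc := cc_nonneg hw
  have h1 : WW K w ((0:ℝ) + (⌊u⌋:ℤ)) ≤ WW K w u := W_mono hw hsum (by simpa using Int.floor_le u)
  rw [W_add_int hsum] at h1
  have h2 : ((⌊u⌋:ℤ):ℝ) ≥ u - 1 := by linarith [Int.sub_one_lt_floor u]
  have h3 : WW K w 0 + (u - 1) * cc K w ≤ WW K w u := by nlinarith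
  unfold Phi
  rw [le_div_iff₀ hc, add_mul, div_mul_cancel₀ _ (ne_of_gt hc)]
  nlinarith

include hw hsum in
lemma Phi_ub (u : ℝ) : Phi K w u ≤ u + (WW K w 0 + cc K w) / (1 + cc K w) := by
  have hc := one_add_cc_pos hw
  have hcc := cc_nonneg hw
  have h1 : WW K w u ≤ WW K w ((0:ℝ) + (⌊u⌋ + 1 : ℤ)) := by
    refine W_mono hw hsum ?_
    push_cast
    linarith [Int.lt_floor_add_one u]
  rw [W_add_int hsum] at h1
  have h2 : ((⌊u⌋:ℤ):ℝ) ≤ u := Int.floor_le u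
  have h3 : WW K w u ≤ WW K w 0 + (u + 1) * cc K w := by push_cast at h1; nlinarith
  unfold Phi
  rw [div_le_iff₀ hc, add_mul, div_mul_cancel₀ _ (ne_of_gt hc)]
  nlinarith

include hw hsum in
lemma Phi_gap_le (x' : ℝ) (h : ((x':ℝ):S¹) ∈ K) {t : ℝ} (ht : x' < t) :
    Phi K w x' + w ⟨((x':ℝ):S¹), h⟩ / (1 + cc K w) + (t - x') / (1 + cc K w) ≤ Phi K w t := by
  have hc := one_add_cc_pos hw
  have hW := W_jump_ge hw hsum ⟨((x':ℝ):S¹), h⟩ x' rfl ht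
  unfold Phi
  rw [← add_div, ← add_div, div_le_div_iff₀ hc hc]
  nlinarith

-- the set defining pii
include hw hsum in
lemma pii_set_nonempty (y : ℝ) : {t | Phi K w t ≤ y}.Nonempty := by
  refine ⟨y - (WW K w 0 + cc K w) / (1 + cc K w), ?_⟩
  have := Phi_ub hw hsum (y - (WW K w 0 + cc K w) / (1 + cc K w))
  simp only [mem_setOf_eq]
  linarith

include hw hsum in
lemma pii_set_bddAbove (y : ℝ) : BddAbove {t | Phi K w t ≤ y} := by
  refine ⟨y - (WW K w 0 - cc K w) / (1 + cc K w), ?_⟩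
  intro t ht
  simp only [mem_setOf_eq] at ht
  have := Phi_lb hw hsum t
  linarith

include hw hsum in
lemma lt_Phi_of_gt {y t : ℝ} (h : pii K w y < t) : y < Phi K w t := by
  by_contra hcon
  push_neg at hcon
  have : t ≤ pii K w y := le_csSup (pii_set_bddAbove hw hsum y) hcon
  linarith

include hw hsum in
lemma Phi_pii_le (y : ℝ) : Phi K w (pii K w y) ≤ y := by
  have hc := one_add_cc_pos hw
  refine le_of_forall_pos_le_add ?_
  intro ε hε
  obtain ⟨δ, hδpos, hWl⟩ := W_left hw hsum (pii K w y) (show (0:ℝ) < (1 + cc K w) * ε / 2 by positivity)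
  set η := min δ ((1 + cc K w) * ε / 2) with hη
  have hηpos : 0 < η := lt_min hδpos (by positivity)
  obtain ⟨s, hs, hs2⟩ := exists_lt_of_lt_csSup (pii_set_nonempty hw hsum y)
    (show pii K w y - η < pii K w y by linarith)
  simp only [mem_setOf_eq] at hs
  have hsle : s ≤ pii K w y := le_csSup (pii_set_bddAbove hw hsum y) hs
  rcases eq_or_lt_of_le hsle with heq | hlt
  · rw [← heq]; linarith
  · have := hWl s (by have : η ≤ δ := min_le_left _ _; linarith) hlt
    have hηe : η ≤ (1 + cc K w) * ε / 2 := min_le_right _ _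
    unfold Phi at hs ⊢
    rw [div_le_iff₀ hc] at hs ⊢
    nlinarith

include hw hsum in
lemma le_Phi_pii_add (y : ℝ) :
    y ≤ Phi K w (pii K w y) + jmp K w (pii K w y) / (1 + cc K w) := by
  have hc := one_add_cc_pos hw
  refine le_of_forall_pos_le_add ?_
  intro ε hε
  obtain ⟨δ, hδpos, hWr⟩ := W_right hw hsum (pii K w y) (show (0:ℝ) < (1 + cc K w) * ε / 2 by positivity)
  set η := min δ ((1 + cc K w) * ε / 2) with hη
  have hηpos : 0 < η := lt_min hδpos (by positivity)
  set t := pii K w y + η / 2 with hwt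
  have ht1 : pii K w y < t := by simp only [hwt]; linarith
  have hylt : y < Phi K w t := lt_Phi_of_gt hw hsum ht1
  have hWt : WW K w t ≤ WW K w (pii K w y) + jmp K w (pii K w y) + (1 + cc K w) * ε / 2 :=
    hWr t ht1 (by simp only [hwt]; have : η ≤ δ := min_le_left _ _; linarith)
  have hηe : η ≤ (1 + cc K w) * ε / 2 := min_le_right _ _
  calc y ≤ Phi K w t := hylt.le
    _ ≤ ((pii K w y + WW K w (pii K w y) + jmp K w (pii K w y)) + (1 + cc K w) * ε) / (1 + cc K w) := by
        unfold Phi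
        rw [div_le_div_iff₀ hc hc]
        have hnum : t + WW K w t ≤ pii K w y + WW K w (pii K w y) + jmp K w (pii K w y)
            + (1 + cc K w) * ε := by rw [hwt]; linarith
        nlinarith [mul_le_mul_of_nonneg_right hnum hc.le]
    _ = Phi K w (pii K w y) + jmp K w (pii K w y) / (1 + cc K w) + ε := by
        unfold Phi
        field_simp

include hw hsum in
lemma pii_Phi (t : ℝ) : pii K w (Phi K w t) = t := by
  have : {u | Phi K w u ≤ Phi K w t} = Iic t := by
    ext u
    simp only [mem_setOf_eq, mem_Iic]
    exact (Phi_strictMono hw hsum).le_iff_le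
  rw [pii, this, csSup_Iic]

include hw hsum in
lemma pii_mono : Monotone (pii K w) := by
  intro y y' hy
  exact csSup_le_csSup (pii_set_bddAbove hw hsum y') (pii_set_nonempty hw hsum y)
    (fun t ht => le_trans ht hy)

include hw in
lemma sw_pos (x : ↥K) : 0 < w x / (1 + cc K w) := div_pos (hw x) (one_add_cc_pos hw)

lemma jmp_of_mem {t : ℝ} (h : ((t:ℝ):S¹) ∈ K) : jmp K w t = w ⟨((t:ℝ):S¹), h⟩ := by
  rw [jmp, dif_pos h]

lemma jmp_of_not_mem {t : ℝ} (h : ¬ ((t:ℝ):S¹) ∈ K) : jmp K w t = 0 := by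
  rw [jmp, dif_neg h]

include hw hsum in
lemma pii_gap {x' : ℝ} (h : ((x':ℝ):S¹) ∈ K) {s : ℝ} (hs : s ∈ Icc (0:ℝ) 1) :
    pii K w (Phi K w x' + w ⟨((x':ℝ):S¹), h⟩ / (1 + cc K w) * s) = x' := by
  have hc := one_add_cc_pos hw
  have hswp := sw_pos hw (⟨((x':ℝ):S¹), h⟩ : ↥K)
  have : {u | Phi K w u ≤ Phi K w x' + w ⟨((x':ℝ):S¹), h⟩ / (1 + cc K w) * s} = Iic x' := by
    ext u
    simp only [mem_setOf_eq, mem_Iic]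
    constructor
    · intro hu
      by_contra hcon
      push_neg at hcon
      have := Phi_gap_le hw hsum x' h hcon
      have h1 : w ⟨((x':ℝ):S¹), h⟩ / (1 + cc K w) * s ≤ w ⟨((x':ℝ):S¹), h⟩ / (1 + cc K w) :=
        by nlinarith [hs.2]
      have h2 : 0 < (u - x') / (1 + cc K w) := div_pos (by linarith) hc
      linarith
    · intro hu
      have h1 : Phi K w u ≤ Phi K w x' := (Phi_strictMono hw hsum).monotone hu
      have h2 : 0 ≤ w ⟨((x':ℝ):S¹), h⟩ / (1 + cc K w) * s := by nlinarith [hs.1]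
      linarith
  rw [pii, this, csSup_Iic]

include hw hsum in
lemma pii_add_int (y : ℝ) (n : ℤ) : pii K w (y + n) = pii K w y + n := by
  apply le_antisymm
  · have h1 : Phi K w (pii K w (y + n) - n) ≤ y := by
      have := Phi_pii_le hw hsum (y + n)
      have heq : Phi K w (pii K w (y+n) - n + n) = Phi K w (pii K w (y+n) - n) + n :=
        Phi_add_int hw hsum _ n
      simp only [sub_add_cancel] at heq
      linarith
    have h2 : pii K w (y + n) - n ≤ pii K w y := le_csSup (pii_set_bddAbove hw hsum y) h1
    linarith
  · have h1 : Phi K w (pii K w y + n) ≤ y + n := by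
      rw [Phi_add_int hw hsum]
      linarith [Phi_pii_le hw hsum y]
    exact le_csSup (pii_set_bddAbove hw hsum (y+n)) h1

include hw hsum in
lemma eq_Phi_pii_of_not_mem {y : ℝ} (h : ¬ ((pii K w y : ℝ):S¹) ∈ K) : Phi K w (pii K w y) = y := by
  have h1 := Phi_pii_le hw hsum y
  have h2 := le_Phi_pii_add hw hsum y
  rw [jmp_of_not_mem h] at h2
  simp only [zero_div] at h2
  linarith

include hw hsum in
lemma gap_coord_mem {y : ℝ} (h : ((pii K w y : ℝ):S¹) ∈ K) :
    (y - Phi K w (pii K w y)) / (w ⟨((pii K w y:ℝ):S¹), h⟩ / (1 + cc K w)) ∈ Icc (0:ℝ) 1 := by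
  have h1 := Phi_pii_le hw hsum y
  have h2 := le_Phi_pii_add hw hsum y
  rw [jmp_of_mem h] at h2
  have hswp := sw_pos hw (⟨((pii K w y:ℝ):S¹), h⟩ : ↥K)
  constructor
  · exact div_nonneg (by linarith) hswp.le
  · rw [div_le_one hswp]
    linarith

end lemmas3

noncomputable def sw (x : ↥K) : ℝ := w x / (1 + cc K w)

open Classical in
noncomputable def FF (g : ↥K → ℝ → ℝ) (ℓ : ℝ) (hℓ : ((ℓ:ℝ):S¹) ∈ K) (y : ℝ) : ℝ :=
  if h : ((pii K w y : ℝ) : S¹) ∈ K then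
    Phi K w (pii K w y + ℓ) +
      sw K w ⟨((pii K w y + ℓ : ℝ) : S¹), K.add_mem h hℓ⟩ *
        g ⟨((pii K w y + ℓ : ℝ) : S¹), K.add_mem h hℓ⟩
          ((y - Phi K w (pii K w y)) / sw K w ⟨((pii K w y : ℝ) : S¹), h⟩)
  else Phi K w (pii K w y + ℓ)

section lemmas4
variable {K w}
variable (hw : ∀ x, 0 < w x) (hsum : Summable w)
variable {g g₁ g₂ : ↥K → ℝ → ℝ} {ℓ ℓ₁ ℓ₂ : ℝ}

/-- Goodness of the fibre maps. -/
def GoodG (g : ↥K → ℝ → ℝ) : Prop :=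
  ∀ x, StrictMono (g x) ∧ g x 0 = 0 ∧ g x 1 = 1

lemma GoodG.mem_Icc (hg : GoodG g) {s : ℝ} (hs : s ∈ Icc (0:ℝ) 1) (x : ↥K) :
    g x s ∈ Icc (0:ℝ) 1 := by
  obtain ⟨hm, h0, h1⟩ := hg x
  constructor
  · rw [← h0]; exact hm.monotone hs.1
  · rw [← h1]; exact hm.monotone hs.2

include hw hsum in
lemma FF_of_mem (hℓ : ((ℓ:ℝ):S¹) ∈ K) {y : ℝ} (h : ((pii K w y : ℝ) : S¹) ∈ K) :
    FF K w g ℓ hℓ y = Phi K w (pii K w y + ℓ) +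
      sw K w ⟨((pii K w y + ℓ : ℝ) : S¹), K.add_mem h hℓ⟩ *
        g ⟨((pii K w y + ℓ : ℝ) : S¹), K.add_mem h hℓ⟩
          ((y - Phi K w (pii K w y)) / sw K w ⟨((pii K w y : ℝ) : S¹), h⟩) := by
  rw [FF, dif_pos h]

include hw hsum in
lemma FF_of_not_mem (hℓ : ((ℓ:ℝ):S¹) ∈ K) {y : ℝ} (h : ¬ ((pii K w y : ℝ) : S¹) ∈ K) :
    FF K w g ℓ hℓ y = Phi K w (pii K w y + ℓ) := by
  rw [FF, dif_neg h]

-- FF applied to a pure Cantor point Φ(t) with t not in the gap set behaves as translation;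
-- applied to a gap point it acts inside the gap.
include hw hsum in
lemma FF_gap_pt (hg : GoodG g) (hℓ : ((ℓ:ℝ):S¹) ∈ K) {x' : ℝ} (h : ((x':ℝ):S¹) ∈ K)
    {s : ℝ} (hs : s ∈ Icc (0:ℝ) 1) :
    FF K w g ℓ hℓ (Phi K w x' + sw K w ⟨((x':ℝ):S¹), h⟩ * s) =
      Phi K w (x' + ℓ) + sw K w ⟨((x' + ℓ : ℝ) : S¹), K.add_mem h hℓ⟩ *
        g ⟨((x' + ℓ : ℝ) : S¹), K.add_mem h hℓ⟩ s := by
  have hpii : pii K w (Phi K w x' + sw K w ⟨((x':ℝ):S¹), h⟩ * s) = x' := pii_gap hw hsum h hs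
  have hswp := sw_pos hw (⟨((x':ℝ):S¹), h⟩ : ↥K)
  rw [FF]
  rw [dif_pos (show ((pii K w (Phi K w x' + sw K w ⟨((x':ℝ):S¹), h⟩ * s):ℝ):S¹) ∈ K by
    rw [hpii]; exact h)]
  simp only [hpii, add_sub_cancel_left]
  have hne : sw K w ⟨((x':ℝ):S¹), h⟩ ≠ 0 := ne_of_gt hswp
  have harg : sw K w ⟨((x':ℝ):S¹), h⟩ * s / sw K w ⟨((x':ℝ):S¹), h⟩ = s := by
    rw [mul_comm, mul_div_assoc, div_self hne, mul_one]
  exact congrArg (fun u => Phi K w (x' + ℓ) +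
    sw K w ⟨((x' + ℓ : ℝ) : S¹), K.add_mem h hℓ⟩ *
      g ⟨((x' + ℓ : ℝ) : S¹), K.add_mem h hℓ⟩ u) harg

lemma mem_add_iff {t : ℝ} (hℓ : ((ℓ:ℝ):S¹) ∈ K) :
    ((t + ℓ : ℝ):S¹) ∈ K ↔ ((t:ℝ):S¹) ∈ K := by
  have h : ((t + ℓ : ℝ):S¹) = ((t:ℝ):S¹) + ((ℓ:ℝ):S¹) := rfl
  rw [h]
  exact K.add_mem_cancel_right hℓ

include hw hsum in
lemma FF_Phi (hg : GoodG g) (hℓ : ((ℓ:ℝ):S¹) ∈ K) (t : ℝ) :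
    FF K w g ℓ hℓ (Phi K w t) = Phi K w (t + ℓ) := by
  have hpii := pii_Phi hw hsum (t := t)
  by_cases h : ((pii K w (Phi K w t) : ℝ):S¹) ∈ K
  · rw [FF_of_mem hw hsum hℓ h]
    simp only [hpii, sub_self, zero_div]
    rw [(hg _).2.1, mul_zero, add_zero]
  · rw [FF_of_not_mem hw hsum hℓ h, hpii]

include hw hsum in
lemma FF_lb (hg : GoodG g) (hℓ : ((ℓ:ℝ):S¹) ∈ K) (y : ℝ) :
    Phi K w (pii K w y + ℓ) ≤ FF K w g ℓ hℓ y := by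
  by_cases h : ((pii K w y : ℝ):S¹) ∈ K
  · rw [FF_of_mem hw hsum hℓ h]
    have h1 := gap_coord_mem hw hsum h
    have h2 := hg.mem_Icc h1 ⟨((pii K w y + ℓ : ℝ):S¹), K.add_mem h hℓ⟩
    have h3 := sw_pos hw (⟨((pii K w y + ℓ : ℝ):S¹), K.add_mem h hℓ⟩ : ↥K)
    simp only [sw]
    nlinarith [h2.1, h3]
  · rw [FF_of_not_mem hw hsum hℓ h]

include hw hsum in
lemma FF_ub (hg : GoodG g) (hℓ : ((ℓ:ℝ):S¹) ∈ K) (y : ℝ) :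
    FF K w g ℓ hℓ y ≤ Phi K w (pii K w y + ℓ) + jmp K w (pii K w y + ℓ) / (1 + cc K w) := by
  by_cases h : ((pii K w y : ℝ):S¹) ∈ K
  · rw [FF_of_mem hw hsum hℓ h]
    have h1 := gap_coord_mem hw hsum h
    have h2 := hg.mem_Icc h1 ⟨((pii K w y + ℓ : ℝ):S¹), K.add_mem h hℓ⟩
    have h3 := sw_pos hw (⟨((pii K w y + ℓ : ℝ):S¹), K.add_mem h hℓ⟩ : ↥K)
    rw [jmp_of_mem (K.add_mem h hℓ)]
    simp only [sw]
    nlinarith [h2.2, h3]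
  · rw [FF_of_not_mem hw hsum hℓ h]
    rw [jmp_of_not_mem (fun hc => h ((mem_add_iff hℓ).1 hc))]
    simp

include hw hsum in
lemma FF_strictMono (hg : GoodG g) (hℓ : ((ℓ:ℝ):S¹) ∈ K) : StrictMono (FF K w g ℓ hℓ) := by
  intro y y' hyy
  have hc := one_add_cc_pos hw
  have hpm : pii K w y ≤ pii K w y' := pii_mono hw hsum hyy.le
  rcases eq_or_lt_of_le hpm with he | hlt
  · by_cases h : ((pii K w y : ℝ):S¹) ∈ K
    · have h' : ((pii K w y' : ℝ):S¹) ∈ K := by rw [← he]; exact h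
      rw [FF_of_mem hw hsum hℓ h, FF_of_mem hw hsum hℓ h']
      simp only [← he]
      have h3 := sw_pos hw (⟨((pii K w y + ℓ : ℝ):S¹), K.add_mem h hℓ⟩ : ↥K)
      have h4 := sw_pos hw (⟨((pii K w y : ℝ):S¹), h⟩ : ↥K)
      have harg : (y - Phi K w (pii K w y)) / sw K w ⟨((pii K w y : ℝ):S¹), h⟩ <
          (y' - Phi K w (pii K w y)) / sw K w ⟨((pii K w y : ℝ):S¹), h⟩ :=
        div_lt_div_of_pos_right (by linarith) h4
      have h5 := (hg ⟨((pii K w y + ℓ : ℝ):S¹), K.add_mem h hℓ⟩).1 harg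
      simp only [sw] at h5 ⊢
      nlinarith
    · have h' : ¬ ((pii K w y' : ℝ):S¹) ∈ K := by rw [← he]; exact h
      have e1 := eq_Phi_pii_of_not_mem hw hsum h
      have e2 := eq_Phi_pii_of_not_mem hw hsum h'
      rw [← he] at e2
      linarith
  · calc FF K w g ℓ hℓ y
        ≤ Phi K w (pii K w y + ℓ) + jmp K w (pii K w y + ℓ) / (1 + cc K w) :=
          FF_ub hw hsum hg hℓ y
      _ < Phi K w (pii K w y' + ℓ) := by
          by_cases h : ((pii K w y + ℓ : ℝ):S¹) ∈ K
          · have := Phi_gap_le hw hsum (pii K w y + ℓ) h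
              (t := pii K w y' + ℓ) (by linarith)
            rw [jmp_of_mem h]
            have hpos : 0 < (pii K w y' + ℓ - (pii K w y + ℓ)) / (1 + cc K w) :=
              div_pos (by linarith) hc
            linarith
          · rw [jmp_of_not_mem h]
            simp only [zero_div, add_zero]
            exact Phi_strictMono hw hsum (by linarith)
      _ ≤ FF K w g ℓ hℓ y' := FF_lb hw hsum hg hℓ y'

include hw hsum in
lemma FF_add_int (hℓ : ((ℓ:ℝ):S¹) ∈ K) (y : ℝ) (n : ℤ) :
    FF K w g ℓ hℓ (y + n) = FF K w g ℓ hℓ y + n := by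
  by_cases h : ((pii K w y : ℝ):S¹) ∈ K
  · have h' : ((pii K w (y + n) : ℝ):S¹) ∈ K := by
      rw [pii_add_int hw hsum, coe_add_int]; exact h
    rw [FF_of_mem hw hsum hℓ h', FF_of_mem hw hsum hℓ h]
    have hPhi : Phi K w (pii K w (y + n) + ℓ) = Phi K w (pii K w y + ℓ) + n := by
      rw [pii_add_int hw hsum, add_right_comm, Phi_add_int hw hsum]
    have hX : (⟨((pii K w (y + n) + ℓ : ℝ):S¹), K.add_mem h' hℓ⟩ : ↥K) =
        ⟨((pii K w y + ℓ : ℝ):S¹), K.add_mem h hℓ⟩ := by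
      apply Subtype.ext
      show ((pii K w (y + n) + ℓ : ℝ):S¹) = ((pii K w y + ℓ : ℝ):S¹)
      rw [pii_add_int hw hsum, add_right_comm, coe_add_int]
    have hX2 : (⟨((pii K w (y + n) : ℝ):S¹), h'⟩ : ↥K) = ⟨((pii K w y : ℝ):S¹), h⟩ := by
      apply Subtype.ext
      show ((pii K w (y + n) : ℝ):S¹) = ((pii K w y : ℝ):S¹)
      rw [pii_add_int hw hsum, coe_add_int]
    have hs : y + n - Phi K w (pii K w (y + n)) = y - Phi K w (pii K w y) := by
      rw [pii_add_int hw hsum, Phi_add_int hw hsum]; ring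
    rw [hPhi, hX, hX2, hs]; ring
  · have h' : ¬ ((pii K w (y + n) : ℝ):S¹) ∈ K := by
      rw [pii_add_int hw hsum, coe_add_int]; exact h
    rw [FF_of_not_mem hw hsum hℓ h', FF_of_not_mem hw hsum hℓ h,
      pii_add_int hw hsum, add_right_comm, Phi_add_int hw hsum]

include hw hsum in
lemma FF_lift_int (n : ℤ) (hℓ : ((ℓ:ℝ):S¹) ∈ K) (hℓ' : ((ℓ + (n:ℤ) : ℝ):S¹) ∈ K) (y : ℝ) :
    FF K w g (ℓ + (n:ℤ)) hℓ' y = FF K w g ℓ hℓ y + n := by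
  by_cases h : ((pii K w y : ℝ):S¹) ∈ K
  · rw [FF_of_mem hw hsum hℓ' h, FF_of_mem hw hsum hℓ h]
    have hPhi : Phi K w (pii K w y + (ℓ + (n:ℝ))) = Phi K w (pii K w y + ℓ) + n := by
      rw [← add_assoc, Phi_add_int hw hsum]
    have hX : (⟨((pii K w y + (ℓ + (n:ℝ)) : ℝ):S¹), K.add_mem h hℓ'⟩ : ↥K) =
        ⟨((pii K w y + ℓ : ℝ):S¹), K.add_mem h hℓ⟩ := by
      apply Subtype.ext
      show ((pii K w y + (ℓ + (n:ℝ)) : ℝ):S¹) = ((pii K w y + ℓ : ℝ):S¹)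
      rw [← add_assoc, coe_add_int]
    rw [hPhi, hX]; ring
  · rw [FF_of_not_mem hw hsum hℓ' h, FF_of_not_mem hw hsum hℓ h,
      ← add_assoc, Phi_add_int hw hsum]

lemma rr_zero : rr K 0 = 0 := by
  have h1 : ((rr K 0 : ℝ) : S¹) = ((0:ℝ):S¹) := coe_rr K 0
  obtain ⟨m, hm⟩ := exists_int_of_coe_eq h1
  have h2 : rr K 0 ∈ Ico (0:ℝ) (0+1) := (AddCircle.equivIco 1 0 (0:↥K).1).2
  have hr : rr K 0 = -(m:ℝ) := by linarith
  have hmle : (m:ℝ) ≤ 0 := by rw [hr] at h2; linarith [h2.1]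
  have hmgt : (-1:ℝ) < (m:ℝ) := by rw [hr] at h2; linarith [h2.2]
  have : m = 0 := by
    have h3 : m ≤ 0 := by exact_mod_cast hmle
    have h4 : (-1:ℤ) < m := by exact_mod_cast hmgt
    omega
  rw [hr, this]
  simp

include hw hsum in
lemma FF_id (hg0 : ∀ x s, g x s = s) (h0 : (((0:ℝ)):S¹) ∈ K) (y : ℝ) :
    FF K w g 0 h0 y = y := by
  by_cases h : ((pii K w y : ℝ):S¹) ∈ K
  · rw [FF_of_mem hw hsum h0 h]
    have hne : sw K w ⟨((pii K w y : ℝ):S¹), h⟩ ≠ 0 := ne_of_gt (sw_pos hw _)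
    have hX : (⟨((pii K w y + 0 : ℝ):S¹), K.add_mem h h0⟩ : ↥K) =
        ⟨((pii K w y : ℝ):S¹), h⟩ := by
      apply Subtype.ext
      show ((pii K w y + 0 : ℝ):S¹) = ((pii K w y : ℝ):S¹)
      rw [add_zero]
    rw [hg0, hX, add_zero, mul_comm, div_mul_cancel₀ _ hne]
    ring
  · rw [FF_of_not_mem hw hsum h0 h, add_zero, eq_Phi_pii_of_not_mem hw hsum h]

include hw hsum in
lemma FF_comp (hg₁ : GoodG g₁) (hg₂ : GoodG g₂) (hℓ₁ : ((ℓ₁:ℝ):S¹) ∈ K)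
    (hℓ₂ : ((ℓ₂:ℝ):S¹) ∈ K) (y : ℝ) :
    FF K w g₂ ℓ₂ hℓ₂ (FF K w g₁ ℓ₁ hℓ₁ y) =
      FF K w (fun x => g₂ x ∘ g₁ (x - ⟨((ℓ₂:ℝ):S¹), hℓ₂⟩)) (ℓ₁ + ℓ₂) (K.add_mem hℓ₁ hℓ₂) y := by
  by_cases h : ((pii K w y : ℝ):S¹) ∈ K
  · have hs : (y - Phi K w (pii K w y)) / sw K w ⟨((pii K w y : ℝ):S¹), h⟩ ∈ Icc (0:ℝ) 1 :=
      gap_coord_mem hw hsum h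
    rw [FF_of_mem hw hsum hℓ₁ h]
    rw [FF_gap_pt hw hsum hg₂ hℓ₂ (K.add_mem h hℓ₁)
      (hg₁.mem_Icc hs ⟨((pii K w y + ℓ₁ : ℝ):S¹), K.add_mem h hℓ₁⟩)]
    rw [FF_of_mem hw hsum (K.add_mem hℓ₁ hℓ₂) h]
    have hPhi : Phi K w (pii K w y + (ℓ₁ + ℓ₂)) = Phi K w (pii K w y + ℓ₁ + ℓ₂) := by
      rw [add_assoc]
    have hXX : (⟨((pii K w y + (ℓ₁ + ℓ₂) : ℝ):S¹), K.add_mem h (K.add_mem hℓ₁ hℓ₂)⟩ : ↥K) =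
        ⟨((pii K w y + ℓ₁ + ℓ₂ : ℝ):S¹), K.add_mem (K.add_mem h hℓ₁) hℓ₂⟩ := by
      apply Subtype.ext
      show ((pii K w y + (ℓ₁ + ℓ₂) : ℝ):S¹) = ((pii K w y + ℓ₁ + ℓ₂ : ℝ):S¹)
      rw [add_assoc]
    have hx : (⟨((pii K w y + ℓ₁ + ℓ₂ : ℝ):S¹), K.add_mem (K.add_mem h hℓ₁) hℓ₂⟩ : ↥K) -
        ⟨((ℓ₂:ℝ):S¹), hℓ₂⟩ = ⟨((pii K w y + ℓ₁ : ℝ):S¹), K.add_mem h hℓ₁⟩ := by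
      apply Subtype.ext
      show ((pii K w y + ℓ₁ + ℓ₂ : ℝ):S¹) - ((ℓ₂:ℝ):S¹) = ((pii K w y + ℓ₁ : ℝ):S¹)
      have h5 : ((pii K w y + ℓ₁ + ℓ₂ : ℝ):S¹) = ((pii K w y + ℓ₁ : ℝ):S¹) + ((ℓ₂:ℝ):S¹) := rfl
      rw [h5, add_sub_cancel_right]
    rw [hPhi, hXX, hx]
    rfl
  · rw [FF_of_not_mem hw hsum hℓ₁ h]
    rw [FF_Phi hw hsum hg₂ hℓ₂ (pii K w y + ℓ₁)]
    rw [FF_of_not_mem hw hsum (K.add_mem hℓ₁ hℓ₂) h, add_assoc]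

include hw hsum in
lemma FF_gap_pt0 (hg : GoodG g) (hℓ : ((ℓ:ℝ):S¹) ∈ K) (hℓ0 : ℓ = 0) (x : ↥K) {s : ℝ}
    (hs : s ∈ Icc (0:ℝ) 1) :
    FF K w g ℓ hℓ (Phi K w (rr K x) + sw K w x * s) = Phi K w (rr K x) + sw K w x * g x s := by
  subst hℓ0
  have hx' : ((rr K x : ℝ):S¹) ∈ K := by rw [coe_rr]; exact x.2
  have hX : (⟨((rr K x : ℝ):S¹), hx'⟩ : ↥K) = x := Subtype.ext (coe_rr K x)
  have h1 := FF_gap_pt hw hsum hg hℓ hx' hs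
  have hXX : (⟨((rr K x + 0 : ℝ):S¹), K.add_mem hx' hℓ⟩ : ↥K) = x := by
    apply Subtype.ext
    show ((rr K x + 0 : ℝ):S¹) = x.1
    rw [add_zero, coe_rr]
  rw [hX, hXX] at h1
  rw [add_zero] at h1
  exact h1

include hw hsum in
lemma FF_id0 (hg0 : ∀ x s, g x s = s) (hℓ : ((ℓ:ℝ):S¹) ∈ K) (hℓ0 : ℓ = 0) (y : ℝ) :
    FF K w g ℓ hℓ y = y := by
  subst hℓ0
  exact FF_id hw hsum hg0 hℓ y

end lemmas4
end Denjoy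

section Descend

noncomputable def descend (F : ℝ → ℝ) (hF : ∀ (y : ℝ) (n : ℤ), F (y + n) = F y + n) :
    S¹ → S¹ :=
  fun q => Quotient.liftOn' q (fun y => ((F y : ℝ) : S¹)) (by
    intro a b hab
    have h1 : -a + b ∈ AddSubgroup.zmultiples (1:ℝ) := QuotientAddGroup.leftRel_apply.1 hab
    obtain ⟨n, hn⟩ := h1
    simp only [zsmul_eq_mul, mul_one] at hn
    have hb : b = a + n := by linarith
    show ((F a : ℝ) : S¹) = ((F b : ℝ) : S¹)
    rw [hb, hF a n, coe_add_int])

lemma descend_mk (F : ℝ → ℝ) (hF : ∀ (y : ℝ) (n : ℤ), F (y + n) = F y + n) (y : ℝ) :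
    descend F hF ((y : ℝ) : S¹) = ((F y : ℝ) : S¹) := rfl

lemma descend_cont (F : ℝ → ℝ) (hF : ∀ (y : ℝ) (n : ℤ), F (y + n) = F y + n)
    (hc : Continuous F) : Continuous (descend F hF) :=
  Continuous.quotient_liftOn' (continuous_quotient_mk'.comp hc) _

end Descend

section Main

variable (K : AddSubgroup S¹) (H₀ : Subgroup (ℝ ≃ₜ ℝ)) (w : ↥K → ℝ)

/-- The underlying fibre maps of an element of the base group. -/
def GG (f : ↥K → ↥H₀) : ↥K → ℝ → ℝ := fun x => ⇑((f x : ↥H₀) : ℝ ≃ₜ ℝ)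

/-- The canonical lift of a translation element. -/
noncomputable def LL (k : Multiplicative ↥K) : ℝ := rr K (Multiplicative.toAdd k)

lemma LL_mem (k : Multiplicative ↥K) : ((LL K k : ℝ):S¹) ∈ K := by
  rw [LL, coe_rr]
  exact (Multiplicative.toAdd k).2

lemma LL_one : LL K (1 : Multiplicative ↥K) = 0 := rr_zero (K := K)

lemma GG_good (hH₀ : ∀ g ∈ H₀, Monotone ⇑g ∧ ∀ x : ℝ, x ∉ Set.Ioo (0:ℝ) 1 → g x = x)
    (f : ↥K → ↥H₀) : GoodG (GG K H₀ f) := by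
  intro x
  obtain ⟨hmono, hfix⟩ := hH₀ _ (f x).2
  refine ⟨hmono.strictMono_of_injective (Homeomorph.injective _), ?_, ?_⟩
  · exact hfix 0 (by norm_num)
  · exact hfix 1 (by norm_num)

/-- The real-line action of a wreath product element. -/
noncomputable def FAmap (a : (↥K → ↥H₀) ⋊[shiftAut K ↥H₀] Multiplicative ↥K) : ℝ → ℝ :=
  FF K w (GG K H₀ a.left) (LL K a.right) (LL_mem K a.right)

variable {K w}
variable (hw : ∀ x, 0 < w x) (hsum : Summable w)

include hw hsum in
lemma FA_one (y : ℝ) : FAmap K H₀ w 1 y = y :=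
  FF_id0 hw hsum (fun _ _ => rfl) (LL_mem K 1) (LL_one K) y

include hw hsum in
lemma FA_add_int (a) (y : ℝ) (n : ℤ) :
    FAmap K H₀ w a (y + n) = FAmap K H₀ w a y + n :=
  FF_add_int hw hsum (LL_mem K a.right) y n

include hw hsum in
lemma FA_mul (hH₀ : ∀ g ∈ H₀, Monotone ⇑g ∧ ∀ x : ℝ, x ∉ Set.Ioo (0:ℝ) 1 → g x = x)
    (a b : (↥K → ↥H₀) ⋊[shiftAut K ↥H₀] Multiplicative ↥K) :
    ∃ n : ℤ, ∀ y, FAmap K H₀ w a (FAmap K H₀ w b y) = FAmap K H₀ w (a*b) y + n := by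
  have hsub : (⟨((LL K a.right : ℝ):S¹), LL_mem K a.right⟩ : ↥K) = Multiplicative.toAdd a.right :=
    Subtype.ext (coe_rr K _)
  have hcomb : (fun x => GG K H₀ a.left x ∘
      GG K H₀ b.left (x - ⟨((LL K a.right : ℝ):S¹), LL_mem K a.right⟩)) =
      GG K H₀ ((a*b).left) := by
    funext x s
    rw [hsub]
    rfl
  obtain ⟨n, hn⟩ : ∃ n : ℤ, LL K b.right + LL K a.right = LL K ((a*b).right) + n := by
    apply exists_int_of_coe_eq
    show ((LL K ((a*b).right) : ℝ) : S¹) = ((LL K b.right + LL K a.right : ℝ) : S¹)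
    have h1 : ((LL K b.right + LL K a.right : ℝ) : S¹) =
        ((LL K b.right:ℝ):S¹) + ((LL K a.right:ℝ):S¹) := rfl
    rw [h1, LL, LL, LL, coe_rr, coe_rr, coe_rr]
    show ((Multiplicative.toAdd a.right + Multiplicative.toAdd b.right : ↥K) : S¹) = _
    rw [AddSubgroup.coe_add]
    exact add_comm _ _
  refine ⟨n, fun y => ?_⟩
  show FF K w (GG K H₀ a.left) (LL K a.right) (LL_mem K a.right)
    (FF K w (GG K H₀ b.left) (LL K b.right) (LL_mem K b.right) y) = _
  rw [FF_comp hw hsum (GG_good K H₀ hH₀ b.left) (GG_good K H₀ hH₀ a.left)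
    (LL_mem K b.right) (LL_mem K a.right) y]
  rw [hcomb]
  simp only [hn]
  exact FF_lift_int hw hsum n (LL_mem K _) _ y

include hw hsum in
lemma FA_strictMono (hH₀ : ∀ g ∈ H₀, Monotone ⇑g ∧ ∀ x : ℝ, x ∉ Set.Ioo (0:ℝ) 1 → g x = x)
    (a) : StrictMono (FAmap K H₀ w a) :=
  FF_strictMono hw hsum (GG_good K H₀ hH₀ a.left) (LL_mem K a.right)

include hw hsum in
lemma FA_surj (hH₀ : ∀ g ∈ H₀, Monotone ⇑g ∧ ∀ x : ℝ, x ∉ Set.Ioo (0:ℝ) 1 → g x = x)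
    (a) : Function.Surjective (FAmap K H₀ w a) := by
  intro y
  obtain ⟨n, hn⟩ := FA_mul H₀ hw hsum hH₀ a a⁻¹
  refine ⟨FAmap K H₀ w a⁻¹ (y - n), ?_⟩
  have := hn (y - n)
  rw [mul_inv_cancel] at this
  rw [this, FA_one H₀ hw hsum]
  ring

include hw hsum in
lemma FA_cont (hH₀ : ∀ g ∈ H₀, Monotone ⇑g ∧ ∀ x : ℝ, x ∉ Set.Ioo (0:ℝ) 1 → g x = x)
    (a) : Continuous (FAmap K H₀ w a) :=
  ((FA_strictMono H₀ hw hsum hH₀ a).orderIsoOfSurjective _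
    (FA_surj H₀ hw hsum hH₀ a)).toHomeomorph.continuous

end Main



section Main2

variable {K : AddSubgroup S¹} (H₀ : Subgroup (ℝ ≃ₜ ℝ)) {w : ↥K → ℝ}
variable (hw : ∀ x, 0 < w x) (hsum : Summable w)

noncomputable def CCmap (a : (↥K → ↥H₀) ⋊[shiftAut K ↥H₀] Multiplicative ↥K) : S¹ → S¹ :=
  descend (FAmap K H₀ w a) (FA_add_int H₀ hw hsum a)

lemma CC_one (q : S¹) : CCmap H₀ hw hsum 1 q = q := by
  induction q using QuotientAddGroup.induction_on with
  | H z => exact congrArg (fun t : ℝ => ((t:ℝ):S¹)) (FA_one H₀ hw hsum z)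

include hw hsum in
lemma CC_mul (hH₀ : ∀ g ∈ H₀, Monotone ⇑g ∧ ∀ x : ℝ, x ∉ Set.Ioo (0:ℝ) 1 → g x = x)
    (a b : (↥K → ↥H₀) ⋊[shiftAut K ↥H₀] Multiplicative ↥K) (q : S¹) :
    CCmap H₀ hw hsum (a * b) q = CCmap H₀ hw hsum a (CCmap H₀ hw hsum b q) := by
  induction q using QuotientAddGroup.induction_on with
  | H z =>
    obtain ⟨n, hn⟩ := FA_mul H₀ hw hsum hH₀ a b
    show ((FAmap K H₀ w (a*b) z : ℝ):S¹) = ((FAmap K H₀ w a (FAmap K H₀ w b z) : ℝ):S¹)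
    rw [hn z, coe_add_int]

lemma CC_cont (hH₀ : ∀ g ∈ H₀, Monotone ⇑g ∧ ∀ x : ℝ, x ∉ Set.Ioo (0:ℝ) 1 → g x = x)
    (a : (↥K → ↥H₀) ⋊[shiftAut K ↥H₀] Multiplicative ↥K) :
    Continuous (CCmap H₀ hw hsum a) :=
  descend_cont _ _ (FA_cont H₀ hw hsum hH₀ a)

noncomputable def Hmap (hH₀ : ∀ g ∈ H₀, Monotone ⇑g ∧ ∀ x : ℝ, x ∉ Set.Ioo (0:ℝ) 1 → g x = x)
    (a : (↥K → ↥H₀) ⋊[shiftAut K ↥H₀] Multiplicative ↥K) : S¹ ≃ₜ S¹ where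
  toFun := CCmap H₀ hw hsum a
  invFun := CCmap H₀ hw hsum a⁻¹
  left_inv q := by
    rw [← CC_mul H₀ hw hsum hH₀ a⁻¹ a q, inv_mul_cancel]
    exact CC_one H₀ hw hsum q
  right_inv q := by
    rw [← CC_mul H₀ hw hsum hH₀ a a⁻¹ q, mul_inv_cancel]
    exact CC_one H₀ hw hsum q
  continuous_toFun := CC_cont H₀ hw hsum hH₀ a
  continuous_invFun := CC_cont H₀ hw hsum hH₀ a⁻¹

noncomputable def psiHom (hH₀ : ∀ g ∈ H₀, Monotone ⇑g ∧ ∀ x : ℝ, x ∉ Set.Ioo (0:ℝ) 1 → g x = x) :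
    ((↥K → ↥H₀) ⋊[shiftAut K ↥H₀] Multiplicative ↥K) →* (S¹ ≃ₜ S¹) :=
  MonoidHom.mk' (Hmap H₀ hw hsum hH₀)
    (fun a b => Homeomorph.ext (fun q => CC_mul H₀ hw hsum hH₀ a b q))

include hw hsum in
lemma psi_inj (hH₀ : ∀ g ∈ H₀, Monotone ⇑g ∧ ∀ x : ℝ, x ∉ Set.Ioo (0:ℝ) 1 → g x = x) :
    Function.Injective (psiHom H₀ hw hsum hH₀) := by
  rw [injective_iff_map_eq_one]
  intro a ha
  have hfix : ∀ q : S¹, CCmap H₀ hw hsum a q = q := by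
    intro q
    have h1 : Hmap H₀ hw hsum hH₀ a = 1 := ha
    calc CCmap H₀ hw hsum a q = Hmap H₀ hw hsum hH₀ a q := rfl
      _ = q := by rw [h1]; rfl
  have hint : ∀ y : ℝ, ∃ n : ℤ, FAmap K H₀ w a y = y + n := by
    intro y
    have h2 : ((y:ℝ):S¹) = ((FAmap K H₀ w a y : ℝ):S¹) := (hfix ((y:ℝ):S¹)).symm
    exact exists_int_of_coe_eq h2
  have hconst : ∀ y z : ℝ, FAmap K H₀ w a y - y = FAmap K H₀ w a z - z := by
    intro y z
    obtain ⟨ny, hy⟩ := hint y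
    obtain ⟨nz, hz⟩ := hint z
    suffices h : (ny:ℝ) = nz by rw [hy, hz]; linarith
    by_contra hne
    have hdc : Continuous (fun t => FAmap K H₀ w a t - t) :=
      (FA_cont H₀ hw hsum hH₀ a).sub continuous_id
    have huv : min (ny:ℝ) (nz:ℝ) + 1 ≤ max (ny:ℝ) (nz:ℝ) := by
      rcases lt_or_gt_of_ne hne with h | h
      · have h2 : ny < nz := by exact_mod_cast h
        have h3 : ny + 1 ≤ nz := by omega
        rw [min_eq_left h.le, max_eq_right h.le]
        exact_mod_cast h3
      · have h2 : nz < ny := by exact_mod_cast h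
        have h3 : nz + 1 ≤ ny := by omega
        rw [min_eq_right h.le, max_eq_left h.le]
        exact_mod_cast h3
    have hdy : FAmap K H₀ w a y - y = (ny:ℝ) := by rw [hy]; ring
    have hdz : FAmap K H₀ w a z - z = (nz:ℝ) := by rw [hz]; ring
    have hval : min (ny:ℝ) (nz:ℝ) + 1/2 ∈
        uIcc (FAmap K H₀ w a y - y) (FAmap K H₀ w a z - z) := by
      rw [hdy, hdz]
      constructor
      · linarith
      · linarith [huv]
    obtain ⟨t, _, ht⟩ := intermediate_value_uIcc (hdc.continuousOn) hval
    obtain ⟨m, hm2⟩ := hint t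
    have hmu : (m:ℝ) = min (ny:ℝ) (nz:ℝ) + 1/2 := by
      have hb : FAmap K H₀ w a t - t = min (ny:ℝ) (nz:ℝ) + 1/2 := ht
      rw [hm2] at hb
      linarith
    have h2m : (2*m : ℤ) = 2 * (min ny nz) + 1 := by
      have hcast : ((min ny nz : ℤ):ℝ) = min (ny:ℝ) (nz:ℝ) := by
        push_cast
        rfl
      have : (2*(m:ℝ)) = 2 * ((min ny nz : ℤ):ℝ) + 1 := by rw [hcast]; linarith
      exact_mod_cast this
    omega
  obtain ⟨n0, hn0⟩ := hint 0
  have hall : ∀ y, FAmap K H₀ w a y = y + n0 := by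
    intro y
    have h9 := hconst y 0
    rw [hn0] at h9
    linarith
  have hLa : LL K a.right = (n0:ℝ) := by
    have h3 : FAmap K H₀ w a (Phi K w 0) = Phi K w (0 + LL K a.right) :=
      FF_Phi hw hsum (GG_good K H₀ hH₀ a.left) (LL_mem K a.right) 0
    have h4 : FAmap K H₀ w a (Phi K w 0) = Phi K w 0 + n0 := hall _
    have h5 : Phi K w (0 + LL K a.right) = Phi K w ((0:ℝ) + (n0:ℤ)) := by
      rw [Phi_add_int hw hsum 0 n0, ← h3, h4]
    have h6 := (Phi_strictMono hw hsum).injective h5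
    push_cast at h6
    linarith
  have hk : a.right = 1 := by
    have h6 : ((LL K a.right : ℝ):S¹) = (Multiplicative.toAdd a.right).1 := coe_rr K _
    have h7 : ((LL K a.right : ℝ):S¹) = ((0:↥K):S¹) := by
      rw [hLa]
      have h8 : (((n0:ℤ):ℝ):S¹) = (((0:ℝ) + (n0:ℤ) : ℝ):S¹) := by norm_num
      rw [h8, coe_add_int]
      rfl
    have h8 : Multiplicative.toAdd a.right = 0 := Subtype.ext (h6.symm.trans h7)
    calc a.right = Multiplicative.ofAdd (Multiplicative.toAdd a.right) := rfl
      _ = Multiplicative.ofAdd 0 := by rw [h8]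
      _ = 1 := rfl
  have hL0 : LL K a.right = 0 := by rw [hk]; exact LL_one K
  have hn00 : (n0:ℝ) = 0 := by rw [← hLa, hL0]
  have hbase : a.left = 1 := by
    funext x
    apply Subtype.ext
    apply Homeomorph.ext
    intro s
    show GG K H₀ a.left x s = s
    by_cases hs : s ∈ Icc (0:ℝ) 1
    · have e1 := FF_gap_pt0 hw hsum (GG_good K H₀ hH₀ a.left) (LL_mem K a.right) hL0 x hs
      have e2 : FF K w (GG K H₀ a.left) (LL K a.right) (LL_mem K a.right)
          (Phi K w (rr K x) + sw K w x * s) = Phi K w (rr K x) + sw K w x * s := by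
        have := hall (Phi K w (rr K x) + sw K w x * s)
        rw [hn00, add_zero] at this
        exact this
      have e3 : Phi K w (rr K x) + sw K w x * GG K H₀ a.left x s
          = Phi K w (rr K x) + sw K w x * s := e1.symm.trans e2
      have e4 : sw K w x * GG K H₀ a.left x s = sw K w x * s := by linarith
      exact mul_left_cancel₀ (ne_of_gt (sw_pos hw x)) e4
    · refine (hH₀ _ (a.left x).2).2 s ?_
      intro hmem
      exact hs ⟨hmem.1.le, hmem.2.le⟩
  apply SemidirectProduct.ext
  · rw [hbase]; rfl
  · rw [hk]; rfl

end Main2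

/-- For every countable subgroup `K ≤ ℝ/ℤ` and every group `H₀` of orientation-preserving
homeomorphisms of the unit interval (modelled as monotone homeomorphisms of `ℝ` supported in
`(0,1)`), the unrestricted wreath product `H₀ ≀ K = (∏_{k ∈ K} H₀) ⋊ K` embeds into
`Homeo₊(S¹)`. -/
theorem stmt16 (K : AddSubgroup S¹) (hK : Countable ↥K)
    (H₀ : Subgroup (ℝ ≃ₜ ℝ))
    (hH₀ : ∀ g ∈ H₀, Monotone ⇑g ∧ ∀ x : ℝ, x ∉ Set.Ioo (0:ℝ) 1 → g x = x) :
    ∃ ψ : (↥K → ↥H₀) ⋊[shiftAut K ↥H₀] Multiplicative ↥K →* (S¹ ≃ₜ S¹),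
      Function.Injective ψ ∧ ∀ w, OrientationPreserving (ψ w) := by
  classical
  haveI := hK
  obtain ⟨e, he⟩ := Countable.exists_injective_nat ↥K
  have hw : ∀ x : ↥K, 0 < ((fun x : ↥K => (1/2:ℝ) ^ (e x)) x) := fun x => by positivity
  have hsum : Summable (fun x : ↥K => (1/2:ℝ) ^ (e x)) :=
    summable_geometric_two.comp_injective he
  refine ⟨psiHom H₀ hw hsum hH₀, psi_inj H₀ hw hsum hH₀, ?_⟩
  intro a
  refine ⟨⟨⟨FAmap K H₀ (fun x : ↥K => (1/2:ℝ) ^ (e x)) a,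
    (FA_strictMono H₀ hw hsum hH₀ a).monotone⟩, ?_⟩, ?_⟩
  · intro y
    have h1 := FA_add_int H₀ hw hsum a y 1
    push_cast at h1
    exact h1
  · intro x
    rfl
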